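/- The read-modify-write register specification — the set of finite sequences over the symbols rmw(u, v) (u, v ∈ ℤ) executable on a register initialized to 0, where rmw(u, v) is enabled only if the current register value equals u and sets the register to v — is anagram-agnostic. -/
import Mathlib


/-- τ1 ∼ τ2 : the two sequences admit exactly the same legal continuations. -/
def SpecEquiv {A : Type} (T : Set (List A)) (τ1 τ2 : List A) : Prop :=
  ∀ τ' : List A, τ1 ++ τ' ∈ T ↔ τ2 ++ τ' ∈ T

/-- A specification is anagram-agnostic if any two of its members that are
permutations of one another (anagrams) are equivalent. -/
def AnagramAgnostic {A : Type} (T : Set (List A)) : Prop :=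
  ∀ τ1 ∈ T, ∀ τ2 ∈ T, τ1.Perm τ2 → SpecEquiv T τ1 τ2

/-- Execution of read-modify-write sequences: `(u, v)` (i.e. `rmw(u, v)`) is
enabled only if the current register value is `u` and sets it to `v`. -/
inductive RMWExec : ℤ → List (ℤ × ℤ) → ℤ → Prop
  | nil (r : ℤ) : RMWExec r [] r
  | step {v r : ℤ} {w : List (ℤ × ℤ)} (u : ℤ) :
      RMWExec v w r → RMWExec u ((u, v) :: w) r

/-- The rmw register specification: the sequences executable on a register
initialized to `0`. -/
def RMWSpec : Set (List (ℤ × ℤ)) :=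
  {w | ∃ r : ℤ, RMWExec 0 w r}

lemma rmw_append {s r : ℤ} {w1 w2 : List (ℤ × ℤ)} :
    RMWExec s (w1 ++ w2) r ↔ ∃ m, RMWExec s w1 m ∧ RMWExec m w2 r := by
  induction w1 generalizing s with
  | nil =>
    simp only [List.nil_append]
    constructor
    · intro h; exact ⟨s, RMWExec.nil s, h⟩
    · rintro ⟨m, hm, h⟩; cases hm; exact h
  | cons a t ih =>
    constructor
    · intro h
      cases h with
      | step u h' =>
        obtain ⟨m, h1, h2⟩ := ih.mp h'
        exact ⟨m, RMWExec.step _ h1, h2⟩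
    · rintro ⟨m, h1, h2⟩
      cases h1 with
      | step u h' =>
        exact RMWExec.step _ (ih.mpr ⟨m, h', h2⟩)

lemma rmw_count {s r : ℤ} {w : List (ℤ × ℤ)} (h : RMWExec s w r) (x : ℤ) :
    (w.map Prod.fst).count x + (if x = r then 1 else 0)
      = (w.map Prod.snd).count x + (if x = s then 1 else 0) := by
  induction h with
  | nil r => simp
  | @step v r w u h ih =>
    simp only [List.map_cons, List.count_cons, beq_iff_eq,
      @eq_comm ℤ u x, @eq_comm ℤ v x]
    omega

lemma rmw_final_eq {r1 r2 : ℤ} {w1 w2 : List (ℤ × ℤ)} (hp : w1.Perm w2)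
    (h1 : RMWExec 0 w1 r1) (h2 : RMWExec 0 w2 r2) : r1 = r2 := by
  have c1 := rmw_count h1 r1
  have c2 := rmw_count h2 r1
  have e1 : (w1.map Prod.fst).count r1 = (w2.map Prod.fst).count r1 :=
    (hp.map Prod.fst).count_eq r1
  have e2 : (w1.map Prod.snd).count r1 = (w2.map Prod.snd).count r1 :=
    (hp.map Prod.snd).count_eq r1
  by_contra hne
  rw [if_pos rfl] at c1
  rw [if_neg hne] at c2
  omega

theorem stmt8 : AnagramAgnostic RMWSpec := by
  rintro τ1 ⟨r1, h1⟩ τ2 ⟨r2, h2⟩ hp τ'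
  have hr : r1 = r2 := rmw_final_eq hp h1 h2
  subst hr
  constructor
  · rintro ⟨r, hr⟩
    obtain ⟨m, hm1, hm2⟩ := rmw_append.mp hr
    cases rmw_final_eq (List.Perm.refl τ1) h1 hm1
    exact ⟨r, rmw_append.mpr ⟨r1, h2, hm2⟩⟩
  · rintro ⟨r, hr⟩
    obtain ⟨m, hm1, hm2⟩ := rmw_append.mp hr
    cases rmw_final_eq (List.Perm.refl τ2) h2 hm1
    exact ⟨r, rmw_append.mpr ⟨r1, h1, hm2⟩⟩
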